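/- Let G be a finite non-abelian DC p-group with nilpotency class c. Then for each i with 2 ≤ i ≤ c there exist elements a_i ∈ K_{i-1}(G) and b_i ∈ G such that K_i(G) equals the derived subgroup of ⟨a_i, b_i⟩. Consequently, for any subgroup H ≤ G with |K_i(G)| ≤ |H'|, one has K_i(G) ≤ H'. -/

import Mathlib

/-- A group is a `DC`-group if the set of derived subgroups of its subgroups
is a chain under inclusion. -/
def IsDCGroup (G : Type*) [Group G] : Prop :=
  ∀ H K : Subgroup G, ⁅H, H⁆ ≤ ⁅K, K⁆ ∨ ⁅K, K⁆ ≤ ⁅H, H⁆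

open scoped commutatorElement

/-- If `a` lies in the `n`-th term of the lower central series, then the derived
subgroup of `⟨a, b⟩` lies in the `(n+1)`-st term. -/
private lemma derived_closure_le (G : Type*) [Group G] (n : ℕ) (a b : G)
    (ha : a ∈ (⊤ : Subgroup G).lowerCentralSeries n) :
    ⁅Subgroup.closure {a, b}, Subgroup.closure {a, b}⁆ ≤ (⊤ : Subgroup G).lowerCentralSeries (n + 1) := by
  set N := (⊤ : Subgroup G).lowerCentralSeries (n + 1) with hN
  haveI : N.Normal := by rw [hN]; infer_instance
  -- work in the quotient by N
  set π : G →* G ⧸ N := QuotientGroup.mk' N with hπ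
  have hcentral : ∀ g : G, Commute (π a) (π g) := by
    intro g
    have : ⁅a, g⁆ ∈ N := by
      rw [hN]
      exact Subgroup.commutator_mem_commutator ha (Subgroup.mem_top g)
    have h1 : π ⁅a, g⁆ = 1 := (QuotientGroup.eq_one_iff _).mpr this
    rw [map_commutatorElement] at h1
    exact commutatorElement_eq_one_iff_commute.mp h1
  rw [Subgroup.commutator_le]
  intro x hx y hy
  suffices h : Commute (π x) (π y) by
    have : π ⁅x, y⁆ = 1 := by
      rw [map_commutatorElement]
      exact commutatorElement_eq_one_iff_commute.mpr h
    exact (QuotientGroup.eq_one_iff _).mp this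
  -- every element of the closure commutes with every element
  have key : ∀ u ∈ Subgroup.closure ({a, b} : Set G), ∀ v ∈ Subgroup.closure ({a, b} : Set G),
      Commute (π u) (π v) := by
    intro u hu v hv
    induction hu, hv using Subgroup.closure_induction₂ with
    | mem x y hx hy =>
      rcases hx with rfl | hx
      · exact hcentral y
      · rcases hy with rfl | hy
        · exact (hcentral x).symm
        · rcases hx with rfl
          rcases hy with rfl
          exact Commute.refl _
    | one_left x hx => simp [Commute.one_left]
    | one_right x hx => simp [Commute.one_right]
    | mul_left x y z hx hy hz h₁ h₂ => simpa [map_mul] using h₁.mul_left h₂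
    | mul_right y z x hy hz hx h₁ h₂ => simpa [map_mul] using h₁.mul_right h₂
    | inv_left x y hx hy h => simpa [map_inv] using h.inv_left
    | inv_right x y hx hy h => simpa [map_inv] using h.inv_right
  exact key x hx y hy

theorem dc_lcs_two_generated (p : ℕ) [Fact p.Prime] (G : Type*) [Group G] [Finite G]
    [Group.IsNilpotent G] (hG : IsPGroup p G) (hdc : IsDCGroup G)
    (hna : ¬ ∀ a b : G, a * b = b * a) :
    ∀ i : ℕ, 2 ≤ i → i ≤ Group.nilpotencyClass G →
      (∃ a ∈ (⊤ : Subgroup G).lowerCentralSeries (i - 2), ∃ b : G,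
        (⊤ : Subgroup G).lowerCentralSeries (i - 1) =
          ⁅Subgroup.closure {a, b}, Subgroup.closure {a, b}⁆) ∧
      ∀ H : Subgroup G, Nat.card ↥((⊤ : Subgroup G).lowerCentralSeries (i - 1)) ≤ Nat.card ↥(⁅H, H⁆ : Subgroup G) →
        (⊤ : Subgroup G).lowerCentralSeries (i - 1) ≤ ⁅H, H⁆ := by
  intro i hi2 _
  obtain ⟨n, rfl⟩ : ∃ n, i = n + 2 := ⟨i - 2, by omega⟩
  have h2 : n + 2 - 2 = n := by omega
  have h1 : n + 2 - 1 = n + 1 := by omega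
  rw [h1, h2]
  -- the family of derived subgroups of two-generated subgroups
  set f : ((⊤ : Subgroup G).lowerCentralSeries n) × G → Subgroup G := fun q =>
    ⁅Subgroup.closure {(q.1 : G), q.2}, Subgroup.closure {(q.1 : G), q.2}⁆ with hf
  obtain ⟨q₀, -, hmax⟩ := Set.Finite.exists_maximalFor f Set.univ Set.finite_univ
    ⟨⟨⟨1, ((⊤ : Subgroup G).lowerCentralSeries n).one_mem⟩, 1⟩, Set.mem_univ _⟩
  have hle : ∀ q, f q ≤ f q₀ := by
    intro q
    rcases hdc (Subgroup.closure {(q.1 : G), q.2}) (Subgroup.closure {(q₀.1 : G), q₀.2}) with h | h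
    · exact h
    · exact hmax (Set.mem_univ q) h
  have key : (⊤ : Subgroup G).lowerCentralSeries (n + 1) = f q₀ := by
    apply le_antisymm
    · show ⁅(⊤ : Subgroup G).lowerCentralSeries n, (⊤ : Subgroup G)⁆ ≤ f q₀
      rw [Subgroup.commutator_le]
      intro g hg h _
      refine hle ⟨⟨g, hg⟩, h⟩ ?_
      exact Subgroup.commutator_mem_commutator
        (Subgroup.subset_closure (Set.mem_insert _ _))
        (Subgroup.subset_closure (Set.mem_insert_of_mem _ rfl))
    · exact derived_closure_le G n _ _ q₀.1.2
  constructor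
  · exact ⟨(q₀.1 : G), q₀.1.2, q₀.2, key⟩
  · intro H hcard
    rcases hdc (Subgroup.closure {(q₀.1 : G), q₀.2}) H with h | h
    · rw [key]; exact h
    · have h' : ⁅H, H⁆ ≤ (⊤ : Subgroup G).lowerCentralSeries (n + 1) := by rw [key]; exact h
      exact le_of_eq (Subgroup.eq_of_le_of_card_ge h' hcard).symm
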